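/- Let ρ be an elliptic N-function. Then for each δ > 0 there exists C_δ ≥ 1 depending only on δ and the characteristics of ρ such that for all a ∈ ℝⁿ and t ≥ 0: (i) ρ_{|a|}(t) ≤ C_δ ρ(t) + δ ρ(|a|), and (ii) ρ(t) ≤ C_δ ρ_{|a|}(t) + δ ρ(|a|). -/

import Mathlib

open Set Filter

/-- An N-function: strictly increasing and convex on `[0,∞)`, vanishing at `0`,
with `ρ(t)/t → 0` as `t → 0⁺` and `t/ρ(t) → 0` as `t → ∞`. -/
def IsNFunction (ρ : ℝ → ℝ) : Prop :=
  ρ 0 = 0 ∧ StrictMonoOn ρ (Ici 0) ∧ ConvexOn ℝ (Ici 0) ρ ∧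
    Tendsto (fun t => ρ t / t) (nhdsWithin 0 (Ioi 0)) (nhds 0) ∧
    Tendsto (fun t => t / ρ t) atTop (nhds 0)

/-- The conjugate (Young/Legendre) function `ρ*(t) = sup_{s ≥ 0} (s t − ρ s)`. -/
noncomputable def conjN (ρ : ℝ → ℝ) (t : ℝ) : ℝ :=
  sSup {y | ∃ s ≥ 0, y = s * t - ρ s}

/-- The shifted N-function `ρ_a(t) = ∫₀ᵗ ρ'(a+τ)/(a+τ) · τ dτ`. -/
noncomputable def shiftN (ρ : ℝ → ℝ) (a : ℝ) (t : ℝ) : ℝ :=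
  ∫ τ in (0:ℝ)..t, deriv ρ (a + τ) / (a + τ) * τ

/-- An elliptic N-function with characteristics `c₁, c₂`: `C¹` on `[0,∞)`,
`C²` on `(0,∞)`, and `ρ'(t) ∼ t ρ''(t)` uniformly in `t > 0`. -/
def IsElliptic (ρ : ℝ → ℝ) (c₁ c₂ : ℝ) : Prop :=
  ContDiffOn ℝ 1 ρ (Ici 0) ∧ ContDiffOn ℝ 2 ρ (Ioi 0) ∧
    ∀ t > 0, c₁ * deriv ρ t ≤ t * deriv (deriv ρ) t ∧
      t * deriv (deriv ρ) t ≤ c₂ * deriv ρ t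

section aux
variable {ρ : ℝ → ℝ} {c₁ c₂ : ℝ}

lemma rho_hasDerivAt (hE : ContDiffOn ℝ 2 ρ (Ioi 0)) {x : ℝ} (hx : 0 < x) :
    HasDerivAt ρ (deriv ρ x) x :=
  ((hE.differentiableOn (by norm_num)).differentiableAt (Ioi_mem_nhds hx)).hasDerivAt

lemma phi_hasDerivAt (hE : ContDiffOn ℝ 2 ρ (Ioi 0)) {x : ℝ} (hx : 0 < x) :
    HasDerivAt (deriv ρ) (deriv (deriv ρ) x) x :=
  (((hE.deriv_of_isOpen isOpen_Ioi le_rfl).differentiableOn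
    one_ne_zero).differentiableAt (Ioi_mem_nhds hx)).hasDerivAt

lemma phi_contOn (hE : ContDiffOn ℝ 2 ρ (Ioi 0)) :
    ContinuousOn (deriv ρ) (Ioi 0) :=
  hE.continuousOn_deriv_of_isOpen isOpen_Ioi (by norm_num)

end aux
section aux2
variable {ρ : ℝ → ℝ} {c₁ c₂ : ℝ}

lemma phi_nonneg (hm : StrictMonoOn ρ (Ici 0)) (hE : ContDiffOn ℝ 2 ρ (Ioi 0))
    {x : ℝ} (hx : 0 < x) : 0 ≤ deriv ρ x := by
  have h := (rho_hasDerivAt hE hx)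
  have ht : Tendsto (slope ρ x) (nhdsWithin x (Ioi x)) (nhds (deriv ρ x)) :=
    (hasDerivAt_iff_tendsto_slope.1 h).mono_left
      (nhdsWithin_mono _ (fun y hy => ne_of_gt hy))
  refine ge_of_tendsto ht ?_
  filter_upwards [self_mem_nhdsWithin] with y hy
  have : ρ x ≤ ρ y := (hm.monotoneOn) (le_of_lt hx) (le_of_lt (hx.trans hy)) hy.le
  have hxy : 0 < y - x := sub_pos.2 hy
  simp only [slope_def_field, div_nonneg_iff]
  exact Or.inl ⟨by linarith, by linarith⟩
end aux2
section aux3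
variable {ρ : ℝ → ℝ} {c₁ c₂ : ℝ}

lemma phi_mono (hc₁ : 0 < c₁) (hm : StrictMonoOn ρ (Ici 0)) (hE : IsElliptic ρ c₁ c₂) :
    MonotoneOn (deriv ρ) (Ioi 0) := by
  refine monotoneOn_of_deriv_nonneg (convex_Ioi 0) (phi_contOn hE.2.1)
    (fun x hx => ?_) (fun x hx => ?_)
  · rw [interior_Ioi] at hx
    exact (phi_hasDerivAt hE.2.1 hx).differentiableAt.differentiableWithinAt
  · rw [interior_Ioi] at hx
    have hx0 : (0:ℝ) < x := hx
    have h1 := (hE.2.2 x hx).1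
    have h2 := phi_nonneg hm hE.2.1 hx
    nlinarith [mul_nonneg hc₁.le h2]
end aux3

section aux4
variable {ρ : ℝ → ℝ} {c₁ c₂ : ℝ}

lemma ftc_pos (hE : ContDiffOn ℝ 2 ρ (Ioi 0)) {s r : ℝ} (hs : 0 < s) (hsr : s ≤ r) :
    ∫ x in s..r, deriv ρ x = ρ r - ρ s := by
  refine intervalIntegral.integral_eq_sub_of_hasDerivAt (fun x hx => ?_) ?_
  · rw [uIcc_of_le hsr] at hx
    exact rho_hasDerivAt hE (lt_of_lt_of_le hs hx.1)
  · apply ContinuousOn.intervalIntegrable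
    refine (phi_contOn hE).mono ?_
    rw [uIcc_of_le hsr]
    exact fun x hx => lt_of_lt_of_le hs hx.1

lemma phi_pos (hc₁ : 0 < c₁) (hm : StrictMonoOn ρ (Ici 0)) (hE : IsElliptic ρ c₁ c₂)
    {x : ℝ} (hx : 0 < x) : 0 < deriv ρ x := by
  rcases lt_or_eq_of_le (phi_nonneg hm hE.2.1 hx) with h | h
  · exact h
  -- deriv ρ x = 0 : then deriv ρ = 0 on (0, x], so ρ constant on [x/2, x], contradiction
  exfalso
  have hx2 : (0:ℝ) < x / 2 := by linarith
  have hzero : ∀ y ∈ Icc (x/2) x, deriv ρ y = 0 := by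
    intro y hy
    have hy0 : 0 < y := lt_of_lt_of_le hx2 hy.1
    have := phi_mono hc₁ hm hE (mem_Ioi.2 hy0) (mem_Ioi.2 hx) hy.2
    have := phi_nonneg hm hE.2.1 hy0
    linarith [h.symm ▸ this]
  have hint : ∫ y in (x/2)..x, deriv ρ y = ρ x - ρ (x/2) := ftc_pos hE.2.1 hx2 (by linarith)
  have hzero' : ∫ y in (x/2)..x, deriv ρ y = 0 := by
    rw [intervalIntegral.integral_congr (g := fun _ => (0:ℝ)) ?_]
    · simp
    · intro y hy; rw [uIcc_of_le (by linarith : x/2 ≤ x)] at hy; exact hzero y hy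
  have hlt : ρ (x/2) < ρ x := hm (le_of_lt hx2) (le_of_lt hx) (by linarith)
  rw [hzero'] at hint
  linarith
end aux4
section aux5
variable {ρ : ℝ → ℝ} {c₁ c₂ : ℝ}

lemma phi_growth (hc₁ : 0 < c₁) (hc₂ : 0 < c₂) (hm : StrictMonoOn ρ (Ici 0))
    (hE : IsElliptic ρ c₁ c₂) {s r : ℝ} (hs : 0 < s) (hsr : s ≤ r) :
    deriv ρ r ≤ (r / s) ^ c₂ * deriv ρ s := by
  have hr : (0:ℝ) < r := lt_of_lt_of_le hs hsr
  set g : ℝ → ℝ := fun x => deriv ρ x * x ^ (-c₂) with hg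
  have hderiv : ∀ x ∈ Ioi (0:ℝ), HasDerivAt g
      (deriv (deriv ρ) x * x ^ (-c₂) + deriv ρ x * (-c₂ * x ^ (-c₂ - 1))) x := by
    intro x hx
    exact (phi_hasDerivAt hE.2.1 hx).mul
      (Real.hasDerivAt_rpow_const (Or.inl (ne_of_gt hx)))
  have hanti : AntitoneOn g (Ioi 0) := by
    refine antitoneOn_of_deriv_nonpos (convex_Ioi 0) ?_ ?_ ?_
    · intro x hx
      exact (hderiv x hx).continuousAt.continuousWithinAt
    · rw [interior_Ioi]
      exact fun x hx => (hderiv x hx).differentiableAt.differentiableWithinAt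
    · rw [interior_Ioi]
      intro x hx
      rw [(hderiv x hx).deriv]
      have hx0 : (0:ℝ) < x := hx
      have h2 := (hE.2.2 x hx0).2
      have hrpow : (0:ℝ) < x ^ (-c₂) := Real.rpow_pos_of_pos hx0 _
      have hrpow1 : (0:ℝ) < x ^ (-c₂ - 1) := Real.rpow_pos_of_pos hx0 _
      have hsplit : x ^ (-c₂) = x * x ^ (-c₂ - 1) := by
        have h := Real.rpow_add hx0 1 (-c₂ - 1)
        rw [Real.rpow_one] at h
        rw [← h]; ring_nf
      have hphi := phi_nonneg hm hE.2.1 hx0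
      -- deriv' x * x^{-c₂} ≤ c₂ * deriv ρ x * x^{-c₂-1}
      have key : deriv (deriv ρ) x * x ^ (-c₂) ≤ c₂ * deriv ρ x * x ^ (-c₂ - 1) := by
        rw [hsplit]
        calc deriv (deriv ρ) x * (x * x ^ (-c₂ - 1))
            = (x * deriv (deriv ρ) x) * x ^ (-c₂ - 1) := by ring
          _ ≤ (c₂ * deriv ρ x) * x ^ (-c₂ - 1) := by
              exact mul_le_mul_of_nonneg_right h2 hrpow1.le
          _ = c₂ * deriv ρ x * x ^ (-c₂ - 1) := by ring
      nlinarith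
  have := hanti (mem_Ioi.2 hs) (mem_Ioi.2 hr) hsr
  -- g r ≤ g s : deriv ρ r * r^{-c₂} ≤ deriv ρ s * s^{-c₂}
  have hrp : (0:ℝ) < r ^ c₂ := Real.rpow_pos_of_pos hr _
  have hsp : (0:ℝ) < s ^ c₂ := Real.rpow_pos_of_pos hs _
  rw [hg] at this
  simp only [Real.rpow_neg hr.le, Real.rpow_neg hs.le] at this
  rw [Real.div_rpow hr.le hs.le]
  rw [div_mul_eq_mul_div, le_div_iff₀ hsp]
  calc deriv ρ r * s ^ c₂ = (deriv ρ r * (r ^ c₂)⁻¹) * (r ^ c₂ * s ^ c₂) := by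
        field_simp
    _ ≤ (deriv ρ s * (s ^ c₂)⁻¹) * (r ^ c₂ * s ^ c₂) := by
        exact mul_le_mul_of_nonneg_right this (by positivity)
    _ = deriv ρ s * r ^ c₂ * (s ^ c₂ * (s ^ c₂)⁻¹) := by ring
    _ = r ^ c₂ * deriv ρ s := by rw [mul_inv_cancel₀ (ne_of_gt hsp)]; ring
end aux5
section aux6
variable {ρ : ℝ → ℝ} {c₁ c₂ : ℝ}

lemma rho_nonneg (hN : IsNFunction ρ) {t : ℝ} (ht : 0 ≤ t) : 0 ≤ ρ t := by
  rcases eq_or_lt_of_le ht with h | h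
  · rw [← h, hN.1]
  · have := hN.2.1 (le_refl (0:ℝ)) (le_of_lt h) h
    rw [hN.1] at this; exact this.le

lemma psi_eq (hE : IsElliptic ρ c₁ c₂) {x : ℝ} (hx : 0 < x) :
    derivWithin ρ (Ici 0) x = deriv ρ x :=
  derivWithin_of_mem_nhds (Ici_mem_nhds hx)

lemma psi_cont (hE : IsElliptic ρ c₁ c₂) :
    ContinuousOn (derivWithin ρ (Ici 0)) (Ici 0) :=
  hE.1.continuousOn_derivWithin (uniqueDiffOn_Ici 0) le_rfl

lemma rho_eq_integral (hE : IsElliptic ρ c₁ c₂) (hN : IsNFunction ρ) {t : ℝ} (ht : 0 ≤ t) :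
    ρ t = ∫ x in (0:ℝ)..t, derivWithin ρ (Ici 0) x := by
  have h := intervalIntegral.integral_eq_sub_of_hasDeriv_right_of_le ht
    (hE.1.continuousOn.mono (Icc_subset_Ici_self))
    (fun x hx => by
      rw [psi_eq hE hx.1]
      exact (rho_hasDerivAt hE.2.1 hx.1).hasDerivWithinAt)
    ((psi_cont hE).mono (by rw [uIcc_of_le ht]; exact Icc_subset_Ici_self)).intervalIntegrable
  rw [h, hN.1, sub_zero]

lemma psi_zero_le (hE : IsElliptic ρ c₁ c₂) (hc₁ : 0 < c₁) (hN : IsNFunction ρ)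
    {t : ℝ} (ht : 0 < t) : derivWithin ρ (Ici 0) 0 ≤ deriv ρ t := by
  have hcont : Tendsto (derivWithin ρ (Ici 0)) (nhdsWithin 0 (Ioi 0))
      (nhds (derivWithin ρ (Ici 0) 0)) := by
    have := (psi_cont hE) 0 Set.self_mem_Ici
    exact this.tendsto.mono_left (nhdsWithin_mono _ (fun y hy => mem_Ici.2 (le_of_lt hy)))
  refine le_of_tendsto hcont ?_
  have hmem : Ioo (0:ℝ) t ∈ nhdsWithin (0:ℝ) (Ioi 0) :=
    Ioo_mem_nhdsGT_of_mem ⟨le_refl 0, ht⟩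
  filter_upwards [hmem] with y hy
  rw [psi_eq hE hy.1]
  exact phi_mono hc₁ hN.2.1 hE (mem_Ioi.2 hy.1) (mem_Ioi.2 ht) hy.2.le

lemma rho_le (hE : IsElliptic ρ c₁ c₂) (hc₁ : 0 < c₁) (hN : IsNFunction ρ)
    {t : ℝ} (ht : 0 < t) : ρ t ≤ t * deriv ρ t := by
  rw [rho_eq_integral hE hN ht.le]
  have hb : ∫ x in (0:ℝ)..t, deriv ρ t = t * deriv ρ t := by
    simp [mul_comm]
  rw [← hb]
  refine intervalIntegral.integral_mono_on ht.le
    ((psi_cont hE).mono (by rw [uIcc_of_le ht.le]; exact Icc_subset_Ici_self)).intervalIntegrable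
    (intervalIntegrable_const) (fun x hx => ?_)
  rcases eq_or_lt_of_le hx.1 with h | h
  · rw [← h]; exact psi_zero_le hE hc₁ hN ht
  · rw [psi_eq hE h]
    rcases eq_or_lt_of_le hx.2 with h2 | h2
    · rw [h2]
    · exact phi_mono hc₁ hN.2.1 hE (mem_Ioi.2 h) (mem_Ioi.2 ht) hx.2

lemma rho_ge (hE : IsElliptic ρ c₁ c₂) (hc₁ : 0 < c₁) (hc₂ : 0 < c₂) (hN : IsNFunction ρ)
    {t : ℝ} (ht : 0 < t) : t * deriv ρ t ≤ 2 * (2:ℝ) ^ c₂ * ρ t := by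
  have ht2 : (0:ℝ) < t / 2 := by linarith
  have hint : ∫ x in (t/2)..t, deriv ρ x = ρ t - ρ (t/2) := ftc_pos hE.2.1 ht2 (by linarith)
  have hlow : (t/2) * deriv ρ (t/2) ≤ ∫ x in (t/2)..t, deriv ρ x := by
    have hb : ∫ x in (t/2)..t, deriv ρ (t/2) = (t/2) * deriv ρ (t/2) := by
      rw [intervalIntegral.integral_const, smul_eq_mul]; ring_nf
    rw [← hb]
    refine intervalIntegral.integral_mono_on (by linarith)
      (intervalIntegrable_const)
      ((phi_contOn hE.2.1).mono (by rw [uIcc_of_le (by linarith : t/2 ≤ t)]; exact fun x hx => lt_of_lt_of_le ht2 hx.1)).intervalIntegrable (fun x hx => ?_)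
    exact phi_mono hc₁ hN.2.1 hE (mem_Ioi.2 ht2) (mem_Ioi.2 (lt_of_lt_of_le ht2 hx.1)) hx.1
  have hgrow : deriv ρ t ≤ (2:ℝ) ^ c₂ * deriv ρ (t/2) := by
    have := phi_growth hc₁ hc₂ hN.2.1 hE ht2 (by linarith : t/2 ≤ t)
    have h2 : t / (t/2) = 2 := by field_simp
    rwa [h2] at this
  have hrho2 : 0 ≤ ρ (t/2) := rho_nonneg hN ht2.le
  have hK : (0:ℝ) < (2:ℝ) ^ c₂ := Real.rpow_pos_of_pos (by norm_num) _
  nlinarith [rho_nonneg hN ht.le]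
end aux6
section aux7
variable {ρ : ℝ → ℝ} {c₁ c₂ : ℝ}

lemma shift_cont (hE : IsElliptic ρ c₁ c₂) {a : ℝ} (ha : 0 < a) :
    ContinuousOn (fun τ => deriv ρ (a + τ) / (a + τ) * τ) (Ici 0) := by
  refine ContinuousOn.mul (ContinuousOn.div ?_ ?_ ?_) continuousOn_id
  · exact (phi_contOn hE.2.1).comp (continuous_const.add continuous_id).continuousOn
      (fun τ hτ => mem_Ioi.2 (add_pos_of_pos_of_nonneg ha hτ))
  · exact (continuous_const.add continuous_id).continuousOn
  · exact fun τ hτ => ne_of_gt (add_pos_of_pos_of_nonneg ha hτ)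

lemma shift_integrable (hE : IsElliptic ρ c₁ c₂) {a s r : ℝ} (ha : 0 < a)
    (hs : 0 ≤ s) (hsr : s ≤ r) :
    IntervalIntegrable (fun τ => deriv ρ (a + τ) / (a + τ) * τ) MeasureTheory.volume s r :=
  ((shift_cont hE ha).mono (by rw [uIcc_of_le hsr]; exact fun x hx => le_trans hs hx.1)).intervalIntegrable

-- S1/S5 : upper bound for t ≥ a > 0
lemma shift_upper_large (hE : IsElliptic ρ c₁ c₂) (hc₁ : 0 < c₁) (hc₂ : 0 < c₂)
    (hN : IsNFunction ρ) {a t : ℝ} (ha : 0 < a) (ht : 0 < t) (hat : a ≤ t) :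
    shiftN ρ a t ≤ (2:ℝ) ^ c₂ * (t * deriv ρ t) := by
  have hb : ∫ τ in (0:ℝ)..t, (2:ℝ) ^ c₂ * deriv ρ t
      = (2:ℝ) ^ c₂ * (t * deriv ρ t) := by
    rw [intervalIntegral.integral_const, smul_eq_mul]; ring
  rw [shiftN, ← hb]
  refine intervalIntegral.integral_mono_on ht.le (shift_integrable hE ha le_rfl ht.le)
    intervalIntegrable_const (fun x hx => ?_)
  have hax : 0 < a + x := add_pos_of_pos_of_nonneg ha hx.1
  have h1 : deriv ρ (a + x) / (a + x) * x ≤ deriv ρ (a + x) := by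
    have hx1 : x / (a + x) ≤ 1 := by
      rw [div_le_one hax]; linarith [hx.1]
    have hphi : 0 ≤ deriv ρ (a + x) := phi_nonneg hN.2.1 hE.2.1 hax
    calc deriv ρ (a + x) / (a + x) * x = deriv ρ (a + x) * (x / (a + x)) := by ring
      _ ≤ deriv ρ (a + x) * 1 := mul_le_mul_of_nonneg_left hx1 hphi
      _ = deriv ρ (a + x) := mul_one _
  have h2 : deriv ρ (a + x) ≤ deriv ρ (2 * t) :=
    phi_mono hc₁ hN.2.1 hE (mem_Ioi.2 hax) (mem_Ioi.2 (by linarith)) (by linarith [hx.2])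
  have h3 : deriv ρ (2 * t) ≤ (2:ℝ) ^ c₂ * deriv ρ t := by
    have := phi_growth hc₁ hc₂ hN.2.1 hE ht (by linarith : t ≤ 2 * t)
    have h2t : 2 * t / t = 2 := by field_simp
    rwa [h2t] at this
  linarith

-- S2 : upper bound for 0 < t ≤ a
lemma shift_upper_small (hE : IsElliptic ρ c₁ c₂) (hc₁ : 0 < c₁) (hc₂ : 0 < c₂)
    (hN : IsNFunction ρ) {a t : ℝ} (ha : 0 < a) (ht : 0 < t) (hta : t ≤ a) :
    shiftN ρ a t ≤ (2:ℝ) ^ c₂ * deriv ρ a / a * (t ^ 2 / 2) := by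
  have hb : ∫ τ in (0:ℝ)..t, (2:ℝ) ^ c₂ * deriv ρ a / a * τ
      = (2:ℝ) ^ c₂ * deriv ρ a / a * (t ^ 2 / 2) := by
    rw [intervalIntegral.integral_const_mul, integral_id]; ring
  rw [shiftN, ← hb]
  refine intervalIntegral.integral_mono_on ht.le (shift_integrable hE ha le_rfl ht.le)
    (by apply Continuous.intervalIntegrable; continuity) (fun x hx => ?_)
  have hax : 0 < a + x := add_pos_of_pos_of_nonneg ha hx.1
  have h2 : deriv ρ (a + x) ≤ (2:ℝ) ^ c₂ * deriv ρ a := by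
    have hmono : deriv ρ (a + x) ≤ deriv ρ (2 * a) :=
      phi_mono hc₁ hN.2.1 hE (mem_Ioi.2 hax) (mem_Ioi.2 (by linarith)) (by linarith [hx.2])
    have := phi_growth hc₁ hc₂ hN.2.1 hE ha (by linarith : a ≤ 2 * a)
    have h2a : 2 * a / a = 2 := by field_simp
    rw [h2a] at this
    linarith
  have h3 : deriv ρ (a + x) / (a + x) ≤ (2:ℝ) ^ c₂ * deriv ρ a / a := by
    have hphi : 0 ≤ deriv ρ (a + x) := phi_nonneg hN.2.1 hE.2.1 hax
    have hd1 : deriv ρ (a + x) / (a + x) ≤ deriv ρ (a + x) / a := by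
      apply div_le_div_of_nonneg_left hphi ha
      linarith [hx.1]
    have hd2 : deriv ρ (a + x) / a ≤ (2:ℝ) ^ c₂ * deriv ρ a / a :=
      (div_le_div_iff_of_pos_right ha).2 h2
    exact hd1.trans hd2
  exact mul_le_mul_of_nonneg_right h3 hx.1

-- S3 : lower bound for 0 < t ≤ a
lemma shift_lower_small (hE : IsElliptic ρ c₁ c₂) (hc₁ : 0 < c₁)
    (hN : IsNFunction ρ) {a t : ℝ} (ha : 0 < a) (ht : 0 < t) (hta : t ≤ a) :
    deriv ρ a / (2 * a) * (t ^ 2 / 2) ≤ shiftN ρ a t := by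
  have hb : ∫ τ in (0:ℝ)..t, deriv ρ a / (2 * a) * τ
      = deriv ρ a / (2 * a) * (t ^ 2 / 2) := by
    rw [intervalIntegral.integral_const_mul, integral_id]; ring
  rw [shiftN, ← hb]
  refine intervalIntegral.integral_mono_on ht.le
    (by apply Continuous.intervalIntegrable; continuity)
    (shift_integrable hE ha le_rfl ht.le) (fun x hx => ?_)
  have hax : 0 < a + x := add_pos_of_pos_of_nonneg ha hx.1
  have h2 : deriv ρ a ≤ deriv ρ (a + x) :=
    phi_mono hc₁ hN.2.1 hE (mem_Ioi.2 ha) (mem_Ioi.2 hax) (by linarith [hx.1])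
  have h3 : deriv ρ a / (2 * a) ≤ deriv ρ (a + x) / (a + x) := by
    apply div_le_div₀ (phi_nonneg hN.2.1 hE.2.1 hax) h2 hax
    linarith [hx.2]
  exact mul_le_mul_of_nonneg_right h3 hx.1
end aux7
section aux8
variable {ρ : ℝ → ℝ} {c₁ c₂ : ℝ}

lemma shift_nonneg (hE : IsElliptic ρ c₁ c₂) (hN : IsNFunction ρ)
    {a t : ℝ} (ha : 0 < a) (ht : 0 ≤ t) : 0 ≤ shiftN ρ a t := by
  rw [shiftN]
  refine intervalIntegral.integral_nonneg ht (fun x hx => ?_)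
  have hax : 0 < a + x := add_pos_of_pos_of_nonneg ha hx.1
  have h0 := phi_nonneg hN.2.1 hE.2.1 hax
  exact mul_nonneg (div_nonneg h0 hax.le) hx.1

-- S4 : lower bound for 0 < a ≤ t
lemma shift_lower_large (hE : IsElliptic ρ c₁ c₂) (hc₁ : 0 < c₁) (hc₂ : 0 < c₂)
    (hN : IsNFunction ρ) {a t : ℝ} (ha : 0 < a) (ht : 0 < t) (hat : a ≤ t) :
    t * deriv ρ t ≤ 8 * (2:ℝ) ^ c₂ * shiftN ρ a t := by
  have ht2 : (0:ℝ) < t / 2 := by linarith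
  have hsplit : shiftN ρ a t = (∫ τ in (0:ℝ)..(t/2), deriv ρ (a + τ) / (a + τ) * τ)
      + ∫ τ in (t/2)..t, deriv ρ (a + τ) / (a + τ) * τ := by
    rw [shiftN, ← intervalIntegral.integral_add_adjacent_intervals
      (shift_integrable hE ha le_rfl ht2.le) (shift_integrable hE ha ht2.le (by linarith))]
  have h1 : (0:ℝ) ≤ ∫ τ in (0:ℝ)..(t/2), deriv ρ (a + τ) / (a + τ) * τ := by
    refine intervalIntegral.integral_nonneg ht2.le (fun x hx => ?_)
    have hax : 0 < a + x := add_pos_of_pos_of_nonneg ha hx.1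
    have h0 := phi_nonneg hN.2.1 hE.2.1 hax
    exact mul_nonneg (div_nonneg h0 hax.le) hx.1
  have h2 : (t/2) * (deriv ρ (t/2) / 4) ≤ ∫ τ in (t/2)..t, deriv ρ (a + τ) / (a + τ) * τ := by
    have hb : ∫ τ in (t/2)..t, deriv ρ (t/2) / 4 = (t/2) * (deriv ρ (t/2) / 4) := by
      rw [intervalIntegral.integral_const, smul_eq_mul]; ring
    rw [← hb]
    refine intervalIntegral.integral_mono_on (by linarith) intervalIntegrable_const
      (shift_integrable hE ha ht2.le (by linarith)) (fun x hx => ?_)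
    have hx0 : 0 < x := lt_of_lt_of_le ht2 hx.1
    have hax : 0 < a + x := by linarith
    have hm1 : deriv ρ (t/2) ≤ deriv ρ (a + x) :=
      phi_mono hc₁ hN.2.1 hE (mem_Ioi.2 ht2) (mem_Ioi.2 hax) (by linarith [hx.1])
    have hq : (1:ℝ)/4 ≤ x / (a + x) := by
      rw [div_le_div_iff₀ (by norm_num) hax]
      have := hx.2
      linarith [hx.1]
    have hphi2 : 0 ≤ deriv ρ (t/2) := phi_nonneg hN.2.1 hE.2.1 ht2
    calc deriv ρ (t/2) / 4 = deriv ρ (t/2) * (1/4) := by ring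
      _ ≤ deriv ρ (a + x) * (x / (a + x)) := by
          apply mul_le_mul hm1 hq (by norm_num)
          exact phi_nonneg hN.2.1 hE.2.1 hax
      _ = deriv ρ (a + x) / (a + x) * x := by ring
  have hgrow : deriv ρ t ≤ (2:ℝ) ^ c₂ * deriv ρ (t/2) := by
    have := phi_growth hc₁ hc₂ hN.2.1 hE ht2 (by linarith : t/2 ≤ t)
    have h2t : t / (t/2) = 2 := by field_simp
    rwa [h2t] at this
  have hK : (0:ℝ) < (2:ℝ) ^ c₂ := Real.rpow_pos_of_pos (by norm_num) _
  nlinarith [phi_nonneg hN.2.1 hE.2.1 ht2]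

lemma shift_zero (hE : IsElliptic ρ c₁ c₂) (hN : IsNFunction ρ)
    {t : ℝ} (ht : 0 ≤ t) : shiftN ρ 0 t = ρ t := by
  rw [shiftN, rho_eq_integral hE hN ht]
  refine intervalIntegral.integral_congr_ae (MeasureTheory.ae_of_all _ (fun x hx => ?_))
  rw [uIoc_of_le ht] at hx
  have hx0 : 0 < x := hx.1
  rw [zero_add, psi_eq hE hx0]
  field_simp
end aux8

set_option maxHeartbeats 2000000 in
/-- Removal of shift. For an elliptic N-function `ρ` and every
`δ > 0` there is `C_δ ≥ 1` (depending only on `δ` and the characteristics of `ρ`)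
such that for all `a ∈ ℝⁿ` and `t ≥ 0`:
`ρ_{|a|}(t) ≤ C_δ ρ(t) + δ ρ(|a|)` and `ρ(t) ≤ C_δ ρ_{|a|}(t) + δ ρ(|a|)`. -/
theorem statement7 (n : ℕ) (ρ : ℝ → ℝ) (c₁ c₂ : ℝ) (hc₁ : 0 < c₁) (hc₂ : 0 < c₂)
    (hN : IsNFunction ρ) (hE : IsElliptic ρ c₁ c₂) (δ : ℝ) (hδ : 0 < δ) :
    ∃ C ≥ (1:ℝ), ∀ a : EuclideanSpace ℝ (Fin n), ∀ t ≥ (0:ℝ),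
      shiftN ρ ‖a‖ t ≤ C * ρ t + δ * ρ ‖a‖ ∧
      ρ t ≤ C * shiftN ρ ‖a‖ t + δ * ρ ‖a‖ := by
  obtain ⟨K, hKdef, hK⟩ : ∃ K : ℝ, K = (2:ℝ) ^ c₂ ∧ 0 < K :=
    ⟨_, rfl, Real.rpow_pos_of_pos (by norm_num) _⟩
  obtain ⟨θ, hθ, hθδ⟩ : ∃ θ : ℝ, 0 < θ ∧ K ^ 2 * θ ^ 2 ≤ δ := by
    refine ⟨min 1 (Real.sqrt δ / K),
      lt_min one_pos (div_pos (Real.sqrt_pos.2 hδ) hK), ?_⟩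
    have h5 : K * min 1 (Real.sqrt δ / K) ≤ Real.sqrt δ := by
      have h := min_le_right (1:ℝ) (Real.sqrt δ / K)
      rw [le_div_iff₀ hK] at h
      linarith
    have h6 : (K * min 1 (Real.sqrt δ / K)) * (K * min 1 (Real.sqrt δ / K))
        ≤ Real.sqrt δ * Real.sqrt δ := by
      apply mul_self_le_mul_self ?_ h5
      have := lt_min one_pos (div_pos (Real.sqrt_pos.2 hδ) hK)
      positivity
    rw [Real.mul_self_sqrt hδ.le] at h6
    calc K ^ 2 * min 1 (Real.sqrt δ / K) ^ 2
        = (K * min 1 (Real.sqrt δ / K)) * (K * min 1 (Real.sqrt δ / K)) := by ring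
      _ ≤ δ := h6
  obtain ⟨ε, hε, hεδ⟩ : ∃ ε : ℝ, 0 < ε ∧ 2 * K * ε ≤ δ := by
    refine ⟨min 1 (δ / (2 * K)), lt_min one_pos (div_pos hδ (by positivity)), ?_⟩
    have h := min_le_right (1:ℝ) (δ / (2 * K))
    rw [le_div_iff₀ (by positivity)] at h
    linarith
  obtain ⟨M, hM, hMgrow⟩ : ∃ M : ℝ, 0 < M ∧ ∀ x : ℝ, 0 ≤ x → x ≤ θ⁻¹ → x ^ c₂ ≤ M := by
    refine ⟨θ⁻¹ ^ c₂, Real.rpow_pos_of_pos (by positivity) _,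
      fun x hx hxx => Real.rpow_le_rpow hx hxx hc₂.le⟩
  obtain ⟨C, hC1, hC0, hC2, hC3, hC4, hC5⟩ : ∃ C : ℝ, 1 ≤ C ∧ 0 ≤ C ∧ 2 * K ^ 2 ≤ C ∧
      K ^ 2 * M ≤ C ∧ 8 * K ≤ C ∧ 4 / ε ^ 2 ≤ C := by
    have p1 : (0:ℝ) ≤ 2 * K ^ 2 := by positivity
    have p2 : (0:ℝ) ≤ K ^ 2 * M := by positivity
    have p3 : (0:ℝ) ≤ 8 * K := by positivity
    have p4 : (0:ℝ) ≤ 4 / ε ^ 2 := by positivity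
    exact ⟨1 + 2 * K ^ 2 + K ^ 2 * M + 8 * K + 4 / ε ^ 2, by linarith, by linarith,
      by linarith, by linarith, by linarith, by linarith⟩
  refine ⟨C, hC1, fun a t ht => ?_⟩
  have hb : (0:ℝ) ≤ ‖a‖ := norm_nonneg a
  have hρt : 0 ≤ ρ t := rho_nonneg hN ht
  have hρb : 0 ≤ ρ ‖a‖ := rho_nonneg hN hb
  rcases eq_or_lt_of_le ht with htz | htpos
  · -- t = 0
    have ht0 : t = 0 := htz.symm
    subst ht0
    have hS0 : shiftN ρ ‖a‖ 0 = 0 := by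
      rw [shiftN, intervalIntegral.integral_same]
    rw [hN.1, hS0]
    have hδρ : 0 ≤ δ * ρ ‖a‖ := mul_nonneg hδ.le hρb
    constructor <;> simp <;> linarith
  rcases eq_or_lt_of_le hb with hbz | hbpos
  · -- ‖a‖ = 0
    rw [← hbz, shift_zero hE hN ht, hN.1]
    have h1 : ρ t ≤ C * ρ t := by
      have h := mul_le_mul_of_nonneg_right hC1 hρt
      linarith
    constructor <;> linarith
  -- main case : 0 < t, 0 < ‖a‖
  have hA : 0 < deriv ρ ‖a‖ := phi_pos hc₁ hN.2.1 hE hbpos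
  have hB : 0 < deriv ρ t := phi_pos hc₁ hN.2.1 hE htpos
  have hρtB : ρ t ≤ t * deriv ρ t := rho_le hE hc₁ hN htpos
  have htB : t * deriv ρ t ≤ 2 * K * ρ t := by
    have := rho_ge hE hc₁ hc₂ hN htpos; rw [← hKdef] at this; linarith
  have hρbA : ρ ‖a‖ ≤ ‖a‖ * deriv ρ ‖a‖ := rho_le hE hc₁ hN hbpos
  have hbA : ‖a‖ * deriv ρ ‖a‖ ≤ 2 * K * ρ ‖a‖ := by
    have := rho_ge hE hc₁ hc₂ hN hbpos; rw [← hKdef] at this; linarith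
  have hS : 0 ≤ shiftN ρ ‖a‖ t := shift_nonneg hE hN hbpos htpos.le
  -- abstract the recurring quantities
  obtain ⟨b, hbeq⟩ : ∃ b : ℝ, b = ‖a‖ := ⟨_, rfl⟩
  obtain ⟨A, hAeq⟩ : ∃ A : ℝ, A = deriv ρ ‖a‖ := ⟨_, rfl⟩
  obtain ⟨B, hBeq⟩ : ∃ B : ℝ, B = deriv ρ t := ⟨_, rfl⟩
  obtain ⟨S, hSeq⟩ : ∃ S : ℝ, S = shiftN ρ ‖a‖ t := ⟨_, rfl⟩
  obtain ⟨Rt, hRteq⟩ : ∃ R : ℝ, R = ρ t := ⟨_, rfl⟩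
  obtain ⟨Rb, hRbeq⟩ : ∃ R : ℝ, R = ρ ‖a‖ := ⟨_, rfl⟩
  rw [← hSeq, ← hRteq, ← hRbeq]
  have hbpos' : 0 < b := by rw [hbeq]; exact hbpos
  have hρt' : 0 ≤ Rt := by rw [hRteq]; exact hρt
  have hρb' : 0 ≤ Rb := by rw [hRbeq]; exact hρb
  have hA' : 0 < A := by rw [hAeq]; exact hA
  have hB' : 0 < B := by rw [hBeq]; exact hB
  have hρtB' : Rt ≤ t * B := by rw [hRteq, hBeq]; exact hρtB
  have htB' : t * B ≤ 2 * K * Rt := by rw [hBeq, hRteq]; exact htB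
  have hρbA' : Rb ≤ b * A := by rw [hRbeq, hbeq, hAeq]; exact hρbA
  have hbA' : b * A ≤ 2 * K * Rb := by rw [hbeq, hAeq, hRbeq]; exact hbA
  have hS' : 0 ≤ S := by rw [hSeq]; exact hS
  rcases le_or_gt b t with hbt | htb
  · -- case b ≤ t
    have hub : S ≤ K * (t * B) := by
      rw [hSeq, hBeq, hKdef]
      exact shift_upper_large hE hc₁ hc₂ hN hbpos htpos (hbeq ▸ hbt)
    have hlb : t * B ≤ 8 * K * S := by
      rw [hSeq, hBeq, hKdef]
      exact shift_lower_large hE hc₁ hc₂ hN hbpos htpos (hbeq ▸ hbt)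
    constructor
    · have h1 : S ≤ 2 * K ^ 2 * Rt := by
        calc S ≤ K * (t * B) := hub
          _ ≤ K * (2 * K * Rt) := mul_le_mul_of_nonneg_left htB' hK.le
          _ = 2 * K ^ 2 * Rt := by ring
      linarith [mul_le_mul_of_nonneg_right hC2 hρt', mul_nonneg hδ.le hρb']
    · have h1 : Rt ≤ 8 * K * S := le_trans hρtB' hlb
      linarith [mul_le_mul_of_nonneg_right hC4 hS', mul_nonneg hδ.le hρb']
  · -- case t < b
    have hub : S ≤ K * A / b * (t ^ 2 / 2) := by
      rw [hSeq, hAeq, hbeq, hKdef]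
      exact shift_upper_small hE hc₁ hc₂ hN hbpos htpos (hbeq ▸ htb.le)
    have hlb : A / (2 * b) * (t ^ 2 / 2) ≤ S := by
      rw [hSeq, hAeq, hbeq]
      exact shift_lower_small hE hc₁ hN hbpos htpos (hbeq ▸ htb.le)
    have hub2 : b * S ≤ K * A * t ^ 2 / 2 := by
      have h := mul_le_mul_of_nonneg_left hub hbpos'.le
      calc b * S ≤ b * (K * A / b * (t ^ 2 / 2)) := h
        _ = K * A * t ^ 2 / 2 := by field_simp
    have hlb2 : A * t ^ 2 / 4 ≤ b * S := by
      have h := mul_le_mul_of_nonneg_left hlb hbpos'.le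
      calc A * t ^ 2 / 4 = b * (A / (2 * b) * (t ^ 2 / 2)) := by field_simp; ring
        _ ≤ b * S := h
    have hBA : B ≤ A := by
      rw [hAeq, hBeq]
      exact phi_mono hc₁ hN.2.1 hE (mem_Ioi.2 htpos) (mem_Ioi.2 hbpos) (hbeq ▸ htb.le)
    constructor
    · -- (i)
      rcases le_or_gt t (θ * b) with hsmall | hbig
      · have ht2 : t ^ 2 ≤ θ ^ 2 * b ^ 2 := by
          have h := mul_self_le_mul_self htpos.le hsmall
          calc t ^ 2 = t * t := sq t
            _ ≤ (θ * b) * (θ * b) := h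
            _ = θ ^ 2 * b ^ 2 := by ring
        have key : b * S ≤ δ * (b * Rb) := by
          calc b * S ≤ K * A * t ^ 2 / 2 := hub2
            _ = (K * A) * t ^ 2 / 2 := by ring
            _ ≤ (K * A) * (θ ^ 2 * b ^ 2) / 2 := by
                have := mul_le_mul_of_nonneg_left ht2 (by positivity : (0:ℝ) ≤ K * A)
                linarith
            _ = (K * θ ^ 2 * b) * (b * A) / 2 := by ring
            _ ≤ (K * θ ^ 2 * b) * (2 * K * Rb) / 2 := by
                have := mul_le_mul_of_nonneg_left hbA'
                  (by positivity : (0:ℝ) ≤ K * θ ^ 2 * b)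
                linarith
            _ = (K ^ 2 * θ ^ 2) * (b * Rb) := by ring
            _ ≤ δ * (b * Rb) := mul_le_mul_of_nonneg_right hθδ (mul_nonneg hbpos'.le hρb')
        have hSδ : S ≤ δ * Rb := by
          refine (mul_le_mul_iff_right₀ hbpos').1 ?_
          calc b * S ≤ δ * (b * Rb) := key
            _ = b * (δ * Rb) := by ring
        linarith [mul_nonneg hC0 hρt']
      · -- θ b < t < b
        have hr : (b / t) ^ c₂ ≤ M := by
          refine hMgrow _ (by positivity) ?_
          rw [div_le_iff₀ htpos]
          have h := mul_le_mul_of_nonneg_left hbig.le (by positivity : (0:ℝ) ≤ θ⁻¹)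
          have h2 : θ⁻¹ * (θ * b) = b := by field_simp
          rw [h2] at h
          linarith
        have hAB : A ≤ M * B := by
          have hg : A ≤ (b / t) ^ c₂ * B := by
            rw [hAeq, hBeq, hbeq]
            exact phi_growth hc₁ hc₂ hN.2.1 hE htpos (hbeq ▸ htb.le)
          calc A ≤ (b / t) ^ c₂ * B := hg
            _ ≤ M * B := mul_le_mul_of_nonneg_right hr hB'.le
        have key : b * S ≤ K ^ 2 * M * (b * Rt) := by
          calc b * S ≤ K * A * t ^ 2 / 2 := hub2
            _ = (K * (t ^ 2 / 2)) * A := by ring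
            _ ≤ (K * (t ^ 2 / 2)) * (M * B) :=
                mul_le_mul_of_nonneg_left hAB (by positivity)
            _ = (K * M * t / 2) * (t * B) := by ring
            _ ≤ (K * M * t / 2) * (2 * K * Rt) :=
                mul_le_mul_of_nonneg_left htB' (by positivity)
            _ = (K ^ 2 * M) * (t * Rt) := by ring
            _ ≤ (K ^ 2 * M) * (b * Rt) := by
                have := mul_le_mul_of_nonneg_right htb.le hρt'
                exact mul_le_mul_of_nonneg_left this (by positivity)
        have hSC : S ≤ K ^ 2 * M * Rt := by
          refine (mul_le_mul_iff_right₀ hbpos').1 ?_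
          calc b * S ≤ K ^ 2 * M * (b * Rt) := key
            _ = b * (K ^ 2 * M * Rt) := by ring
        linarith [mul_le_mul_of_nonneg_right hC3 hρt', mul_nonneg hδ.le hρb']
    · -- (ii)
      rcases le_or_gt t (ε * b) with hsmall | hbig
      · have key : Rt ≤ δ * Rb := by
          calc Rt ≤ t * B := hρtB'
            _ ≤ t * A := mul_le_mul_of_nonneg_left hBA htpos.le
            _ ≤ ε * b * A := mul_le_mul_of_nonneg_right hsmall hA'.le
            _ = ε * (b * A) := by ring
            _ ≤ ε * (2 * K * Rb) := mul_le_mul_of_nonneg_left hbA' hε.le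
            _ = (2 * K * ε) * Rb := by ring
            _ ≤ δ * Rb := mul_le_mul_of_nonneg_right hεδ hρb'
        linarith [mul_nonneg hC0 hS']
      · -- ε b < t < b
        have ht2 : ε ^ 2 * b ^ 2 ≤ t ^ 2 := by
          have h := mul_self_le_mul_self (by positivity : (0:ℝ) ≤ ε * b) hbig.le
          calc ε ^ 2 * b ^ 2 = (ε * b) * (ε * b) := by ring
            _ ≤ t * t := h
            _ = t ^ 2 := (sq t).symm
        have h3 : Rt ≤ b * A := by
          calc Rt ≤ t * B := hρtB'
            _ ≤ t * A := mul_le_mul_of_nonneg_left hBA htpos.le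
            _ ≤ b * A := mul_le_mul_of_nonneg_right htb.le hA'.le
        have h1 : A * (ε ^ 2 * b ^ 2) ≤ A * t ^ 2 := mul_le_mul_of_nonneg_left ht2 hA'.le
        have h2' : b * (ε ^ 2 * (b * A)) ≤ b * (4 * S) := by linarith [h1, hlb2]
        have h2 : ε ^ 2 * (b * A) ≤ 4 * S := (mul_le_mul_iff_right₀ hbpos').1 h2'
        have key : ε ^ 2 * Rt ≤ 4 * S := by
          calc ε ^ 2 * Rt ≤ ε ^ 2 * (b * A) :=
                mul_le_mul_of_nonneg_left h3 (by positivity)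
            _ ≤ 4 * S := h2
        have h4 : Rt ≤ 4 / ε ^ 2 * S := by
          rw [div_mul_eq_mul_div, le_div_iff₀ (by positivity)]
          linarith
        linarith [mul_le_mul_of_nonneg_right hC5 hS', mul_nonneg hδ.le hρb']
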